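/- Let φ : ℕ → ℂ satisfy Σ_{k≥0} |φ_k|² = 1, Σ_{k≥0} k·|φ_k|² = E, and Σ_{k≥0} k²·|φ_k|² = M (all series convergent), and let ξ ≥ 0. Define sequences ψ, ψ̃ : ℕ → ℂ by ψ_0 = ψ̃_0 = 0, ψ_{k+1} = √(k+1)·φ_k / √(E+1), and ψ̃_{k+1} = √(k+1)·(cosh ξ)^{−k}·φ_k / √(E+1) for all k ≥ 0. Then: (i) Σ_{n≥0} |ψ̃_n|² ≤ 1; and (ii) √( (1/4)·(1 + Σ_{n≥0}|ψ̃_n|²)² − |Σ_{n≥0} conj(ψ_n)·ψ̃_n|² ) ≤ ( 8·(E+M)/(E+1) )^{1/4} · √ξ. -/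

import Mathlib

/-- geometric bound: `1 - u^k ≤ k (1-u)` for `0 ≤ u ≤ 1`. -/
lemma aux_one_sub_pow_le (u : ℝ) (hu0 : 0 ≤ u) (hu1 : u ≤ 1) (k : ℕ) :
    1 - u ^ k ≤ (k : ℝ) * (1 - u) := by
  induction k with
  | zero => simp
  | succ n ih =>
    have hun : u ^ n ≤ 1 := pow_le_one₀ hu0 hu1
    have hun0 : 0 ≤ u ^ n := pow_nonneg hu0 n
    have : 1 - u ^ (n + 1) = (1 - u ^ n) + u ^ n * (1 - u) := by ring
    rw [this]
    have h2 : u ^ n * (1 - u) ≤ 1 * (1 - u) :=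
      mul_le_mul_of_nonneg_right hun (by linarith)
    push_cast
    nlinarith

/-- `1 - (cosh ξ)⁻¹ ≤ ξ²/2`. -/
lemma aux_one_sub_inv_cosh (ξ : ℝ) : 1 - (Real.cosh ξ)⁻¹ ≤ ξ ^ 2 / 2 := by
  have hc : 0 < Real.cosh ξ := Real.cosh_pos ξ
  have h1 : Real.cosh ξ ≤ Real.exp (ξ ^ 2 / 2) := Real.cosh_le_exp_half_sq ξ
  have h2 : (Real.exp (ξ ^ 2 / 2))⁻¹ ≤ (Real.cosh ξ)⁻¹ :=
    inv_anti₀ hc h1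
  have h3 : Real.exp (-(ξ ^ 2 / 2)) = (Real.exp (ξ ^ 2 / 2))⁻¹ := Real.exp_neg _
  have h4 : 1 + -(ξ ^ 2 / 2) ≤ Real.exp (-(ξ ^ 2 / 2)) := by
    have := Real.add_one_le_exp (-(ξ ^ 2 / 2)); linarith
  linarith

set_option maxHeartbeats 1600000 in
/-- Lemma 3 of the paper: let `φ` be a normalized state in the Fock basis with
mean photon number `E` and second moment `M`, let `ψ = a†φ/‖a†φ‖` be the
normalized photon-added state and `ψ̃` its attenuated version obtained by
replacing `a†` with `a† (cosh ξ)^(−a†a)`. Then `‖ψ̃‖² ≤ 1` and the trace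
distance `D(ψ, ψ̃) = √(¼ (1 + ‖ψ̃‖²)² − |⟨ψ, ψ̃⟩|²)` is at most
`(8 (E+M)/(E+1))^(1/4) √ξ`. -/
theorem attenuated_photon_addition_bound (φ : ℕ → ℂ) (E M : ℝ)
    (h0 : Summable fun k : ℕ => ‖φ k‖ ^ 2)
    (h1 : Summable fun k : ℕ => (k : ℝ) * ‖φ k‖ ^ 2)
    (h2 : Summable fun k : ℕ => (k : ℝ) ^ 2 * ‖φ k‖ ^ 2)
    (hnorm : ∑' k : ℕ, ‖φ k‖ ^ 2 = 1)
    (hE : ∑' k : ℕ, (k : ℝ) * ‖φ k‖ ^ 2 = E)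
    (hM : ∑' k : ℕ, (k : ℝ) ^ 2 * ‖φ k‖ ^ 2 = M)
    (ξ : ℝ) (hξ : 0 ≤ ξ)
    (ψ ψt : ℕ → ℂ)
    (hψ0 : ψ 0 = 0) (hψt0 : ψt 0 = 0)
    (hψ : ∀ k : ℕ, ψ (k + 1) =
      ((Real.sqrt ((k : ℝ) + 1) / Real.sqrt (E + 1) : ℝ) : ℂ) * φ k)
    (hψt : ∀ k : ℕ, ψt (k + 1) =
      ((Real.sqrt ((k : ℝ) + 1) * Real.cosh ξ ^ (-(k : ℝ)) / Real.sqrt (E + 1) : ℝ) : ℂ) * φ k) :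
    (∑' n : ℕ, ‖ψt n‖ ^ 2 ≤ 1) ∧
    Real.sqrt ((1 / 4) * (1 + ∑' n : ℕ, ‖ψt n‖ ^ 2) ^ 2 -
        ‖∑' n : ℕ, (starRingEnd ℂ) (ψ n) * ψt n‖ ^ 2) ≤
      (8 * (E + M) / (E + 1)) ^ ((1 : ℝ) / 4) * Real.sqrt ξ := by
  set a : ℕ → ℝ := fun k => ‖φ k‖ ^ 2 with ha_def
  have ha : ∀ k, 0 ≤ a k := fun k => sq_nonneg _
  have hEnn : 0 ≤ E := hE ▸ tsum_nonneg (fun k => mul_nonneg (Nat.cast_nonneg k) (ha k))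
  have hMnn : 0 ≤ M := hM ▸ tsum_nonneg (fun k => mul_nonneg (sq_nonneg _) (ha k))
  have hE1 : (0:ℝ) < E + 1 := by linarith
  set t : ℝ := Real.cosh ξ with ht_def
  have ht1 : (1:ℝ) ≤ t := Real.one_le_cosh ξ
  have ht0 : (0:ℝ) < t := lt_of_lt_of_le one_pos ht1
  set u : ℝ := t⁻¹ with hu_def
  have hu0 : 0 ≤ u := le_of_lt (inv_pos.mpr ht0)
  have hu1 : u ≤ 1 := inv_le_one_of_one_le₀ ht1
  -- rpow to pow
  have hrpow : ∀ k : ℕ, t ^ (-(k : ℝ)) = u ^ k := by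
    intro k
    rw [Real.rpow_neg (le_of_lt ht0), Real.rpow_natCast, hu_def, inv_pow]
  set c : ℕ → ℝ := fun k => ((k : ℝ) + 1) * a k / (E + 1) with hc_def
  have hc0 : ∀ k, 0 ≤ c k := fun k =>
    div_nonneg (mul_nonneg (by positivity) (ha k)) (le_of_lt hE1)
  -- summability of c and k*c and their sums
  have hca : Summable (fun k : ℕ => ((k : ℝ) + 1) * a k) := by
    have := h1.add h0
    simpa [add_mul, one_mul] using this
  have hc_sum : Summable c := hca.div_const _
  have htsum_c : ∑' k, c k = 1 := by
    have h : ∑' k : ℕ, ((k : ℝ) + 1) * a k = E + 1 := by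
      have := Summable.tsum_add h1 h0
      simp only [add_mul, one_mul] at *
      rw [this, hE, hnorm]
    rw [hc_def]
    simp only [tsum_div_const, h, div_self (ne_of_gt hE1)]
  have hkca : Summable (fun k : ℕ => (k : ℝ) * (((k : ℝ) + 1) * a k)) := by
    have := h2.add h1
    have heq : (fun k : ℕ => (k : ℝ) * (((k : ℝ) + 1) * a k)) =
        fun k : ℕ => (k : ℝ) ^ 2 * a k + (k : ℝ) * a k := by
      funext k; ring
    rw [heq]; exact this
  have hkc_sum : Summable (fun k : ℕ => (k : ℝ) * c k) := by
    have heq : (fun k : ℕ => (k : ℝ) * c k) =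
        fun k : ℕ => (k : ℝ) * (((k : ℝ) + 1) * a k) / (E + 1) := by
      funext k; rw [hc_def]; ring
    rw [heq]; exact hkca.div_const _
  have htsum_kc : ∑' k : ℕ, (k : ℝ) * c k = (M + E) / (E + 1) := by
    have heq : (fun k : ℕ => (k : ℝ) * c k) =
        fun k : ℕ => ((k : ℝ) ^ 2 * a k + (k : ℝ) * a k) / (E + 1) := by
      funext k; rw [hc_def]; ring
    rw [heq, tsum_div_const, Summable.tsum_add h2 h1, hE, hM]
  -- pointwise formulas
  have hpsi_sq : ∀ k : ℕ, ‖ψ (k + 1)‖ ^ 2 = c k := by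
    intro k
    rw [hψ k, norm_mul, Complex.norm_real, Real.norm_eq_abs, mul_pow, _root_.sq_abs, div_pow,
      Real.sq_sqrt (by positivity : (0:ℝ) ≤ (k : ℝ) + 1),
      Real.sq_sqrt (le_of_lt hE1), hc_def]
    ring
  have hpsit_sq : ∀ k : ℕ, ‖ψt (k + 1)‖ ^ 2 = c k * (u ^ k) ^ 2 := by
    intro k
    rw [hψt k, norm_mul, Complex.norm_real, Real.norm_eq_abs, mul_pow, _root_.sq_abs, hrpow k,
      div_pow, mul_pow, Real.sq_sqrt (by positivity : (0:ℝ) ≤ (k : ℝ) + 1),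
      Real.sq_sqrt (le_of_lt hE1), hc_def]
    ring
  have hinner : ∀ k : ℕ, (starRingEnd ℂ) (ψ (k + 1)) * ψt (k + 1) =
      ((c k * u ^ k : ℝ) : ℂ) := by
    intro k
    rw [hψ k, hψt k, map_mul, Complex.conj_ofReal]
    have : ((Real.sqrt ((k : ℝ) + 1) / Real.sqrt (E + 1) : ℝ) : ℂ) * (starRingEnd ℂ) (φ k) *
        (((Real.sqrt ((k : ℝ) + 1) * t ^ (-(k : ℝ)) / Real.sqrt (E + 1) : ℝ) : ℂ) * φ k) =
        ((Real.sqrt ((k : ℝ) + 1) / Real.sqrt (E + 1) *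
          (Real.sqrt ((k : ℝ) + 1) * t ^ (-(k : ℝ)) / Real.sqrt (E + 1)) : ℝ) : ℂ) *
          ((starRingEnd ℂ) (φ k) * φ k) := by
      push_cast; ring
    rw [this, Complex.conj_mul', ← Complex.ofReal_pow, ← Complex.ofReal_mul]
    congr 1
    rw [hrpow k]
    have h1 : Real.sqrt ((k : ℝ) + 1) / Real.sqrt (E + 1) *
        (Real.sqrt ((k : ℝ) + 1) * u ^ k / Real.sqrt (E + 1)) =
        (Real.sqrt ((k : ℝ) + 1) ^ 2 / Real.sqrt (E + 1) ^ 2) * u ^ k := by ring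
    rw [h1, Real.sq_sqrt (by positivity : (0:ℝ) ≤ (k : ℝ) + 1),
      Real.sq_sqrt (le_of_lt hE1), hc_def, ha_def]
    ring
  -- shifted sequences
  set g2 : ℕ → ℝ := fun k => c k * (u ^ k) ^ 2 with hg2_def
  set g1 : ℕ → ℝ := fun k => c k * u ^ k with hg1_def
  have hg2_le : ∀ k, g2 k ≤ c k := by
    intro k
    simp only [hg2_def]
    have : (u ^ k) ^ 2 ≤ 1 := by
      have := pow_le_one₀ hu0 hu1 (n := k); nlinarith [pow_nonneg hu0 k]
    nlinarith [hc0 k]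
  have hg1_le : ∀ k, g1 k ≤ c k := by
    intro k
    simp only [hg1_def]
    have hp : u ^ k ≤ 1 := pow_le_one₀ hu0 hu1
    nlinarith [hc0 k]
  have hg2_nn : ∀ k, 0 ≤ g2 k := fun k => mul_nonneg (hc0 k) (sq_nonneg _)
  have hg1_nn : ∀ k, 0 ≤ g1 k := fun k => mul_nonneg (hc0 k) (pow_nonneg hu0 k)
  have hg2_sum : Summable g2 := Summable.of_nonneg_of_le hg2_nn hg2_le hc_sum
  have hg1_sum : Summable g1 := Summable.of_nonneg_of_le hg1_nn hg1_le hc_sum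
  set S : ℝ := ∑' k, g2 k with hS_def
  set I : ℝ := ∑' k, g1 k with hI_def
  have hS_le : S ≤ 1 := htsum_c ▸ Summable.tsum_le_tsum hg2_le hg2_sum hc_sum
  have hI_le : I ≤ 1 := htsum_c ▸ Summable.tsum_le_tsum hg1_le hg1_sum hc_sum
  have hS_nn : 0 ≤ S := tsum_nonneg hg2_nn
  have hI_nn : 0 ≤ I := tsum_nonneg hg1_nn
  -- identify the tsums in the goal
  have hFt : (fun n : ℕ => ‖ψt n‖ ^ 2) =
      fun n : ℕ => Nat.casesOn n 0 g2 := by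
    funext n
    cases n with
    | zero => simp [hψt0]
    | succ k => exact hpsit_sq k
  have hFt_sum : Summable (fun n : ℕ => (Nat.casesOn n 0 g2 : ℝ)) := by
    rw [← summable_nat_add_iff 1]
    exact hg2_sum
  have hS_eq : ∑' n : ℕ, ‖ψt n‖ ^ 2 = S := by
    rw [hFt, Summable.tsum_eq_zero_add hFt_sum]
    simp [hS_def]
  have hFi : (fun n : ℕ => (starRingEnd ℂ) (ψ n) * ψt n) =
      fun n : ℕ => (((Nat.casesOn n 0 g1 : ℝ)) : ℂ) := by
    funext n
    cases n with
    | zero => simp [hψ0]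
    | succ k => exact hinner k
  have hFi_sum : Summable (fun n : ℕ => (Nat.casesOn n 0 g1 : ℝ)) := by
    rw [← summable_nat_add_iff 1]
    exact hg1_sum
  have hI_eq : ∑' n : ℕ, (starRingEnd ℂ) (ψ n) * ψt n = ((I : ℝ) : ℂ) := by
    rw [hFi, ← Complex.ofReal_tsum, Summable.tsum_eq_zero_add hFi_sum]
    simp [hI_def]
  have hIabs : ‖∑' n : ℕ, (starRingEnd ℂ) (ψ n) * ψt n‖ = I := by
    rw [hI_eq, Complex.norm_real, Real.norm_eq_abs, abs_of_nonneg hI_nn]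
  clear_value S I
  constructor
  · rw [hS_eq]; exact hS_le
  -- part (ii)
  rw [hS_eq, hIabs]
  -- key identity: 1 + S - 2 I = ∑' c k (1 - u^k)^2
  set w : ℕ → ℝ := fun k => c k * (1 - u ^ k) ^ 2 with hw_def
  have hw_eq : w = fun k => c k - 2 * g1 k + g2 k := by
    funext k; rw [hw_def, hg1_def, hg2_def]; ring
  have hw_sum : Summable w := by
    rw [hw_eq]; exact (hc_sum.sub (hg1_sum.mul_left 2)).add hg2_sum
  have hw_nn : ∀ k, 0 ≤ w k := fun k => mul_nonneg (hc0 k) (sq_nonneg _)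
  have hkey : ∑' k, w k = 1 + S - 2 * I := by
    rw [hw_eq, Summable.tsum_add (hc_sum.sub (hg1_sum.mul_left 2)) hg2_sum,
      Summable.tsum_sub hc_sum (hg1_sum.mul_left 2), tsum_mul_left, htsum_c]
    rw [hS_def, hI_def]; ring
  -- termwise bound: w k ≤ c k * k * ξ²/2
  have hw_le : ∀ k, w k ≤ (ξ ^ 2 / 2) * ((k : ℝ) * c k) := by
    intro k
    have h1u : 1 - u ^ k ≤ (k : ℝ) * (1 - u) := aux_one_sub_pow_le u hu0 hu1 k
    have h2u : 1 - u ≤ ξ ^ 2 / 2 := aux_one_sub_inv_cosh ξ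
    have h3u : 0 ≤ 1 - u ^ k := by
      have := pow_le_one₀ hu0 hu1 (n := k); linarith
    have h4u : 1 - u ^ k ≤ 1 := by
      have := pow_nonneg hu0 k; linarith
    have h5 : (1 - u ^ k) ^ 2 ≤ (k : ℝ) * (ξ ^ 2 / 2) := by
      have hk0 : (0:ℝ) ≤ (k : ℝ) := Nat.cast_nonneg k
      nlinarith
    rw [hw_def]
    have := mul_le_mul_of_nonneg_left h5 (hc0 k)
    nlinarith [hc0 k]
  have hmaj_sum : Summable (fun k : ℕ => (ξ ^ 2 / 2) * ((k : ℝ) * c k)) :=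
    hkc_sum.mul_left _
  have hw_bound : ∑' k, w k ≤ (ξ ^ 2 / 2) * ((M + E) / (E + 1)) := by
    calc ∑' k, w k ≤ ∑' k : ℕ, (ξ ^ 2 / 2) * ((k : ℝ) * c k) :=
          Summable.tsum_le_tsum hw_le hw_sum hmaj_sum
      _ = (ξ ^ 2 / 2) * ((M + E) / (E + 1)) := by rw [tsum_mul_left, htsum_kc]
  set A : ℝ := (E + M) / (E + 1) with hA_def
  clear_value A
  have hA_nn : 0 ≤ A := hA_def ▸ div_nonneg (by linarith : (0:ℝ) ≤ E + M) (le_of_lt hE1)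
  set expr : ℝ := (1 / 4) * (1 + S) ^ 2 - I ^ 2 with hexpr_def
  clear_value expr
  have hfac : expr = ((1 + S - 2 * I) / 2) * ((1 + S + 2 * I) / 2) := by
    rw [hexpr_def]; ring
  have hP_nn : 0 ≤ 1 + S - 2 * I := hkey ▸ tsum_nonneg hw_nn
  have hexpr_nn : 0 ≤ expr := by
    rw [hfac]
    exact mul_nonneg (by linarith) (by linarith)
  have hexpr_le1 : expr ≤ 1 := by
    rw [hexpr_def]
    have h4 : (1 + S) ^ 2 ≤ 2 ^ 2 := pow_le_pow_left₀ (by linarith) (by linarith) 2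
    norm_num at h4
    linarith [sq_nonneg I]
  have hexpr_le2 : expr ≤ (A / 2) * ξ ^ 2 := by
    have hQ : (1 + S + 2 * I) / 2 ≤ 2 := by linarith
    have hP : (1 + S - 2 * I) / 2 ≤ (ξ ^ 2 / 2) * A / 2 := by
      have : 1 + S - 2 * I ≤ (ξ ^ 2 / 2) * ((M + E) / (E + 1)) := hkey ▸ hw_bound
      have hMA : (M + E) / (E + 1) = A := by rw [hA_def]; ring_nf
      linarith [hMA ▸ this]
    rw [hfac]
    have hP0 : 0 ≤ (1 + S - 2 * I) / 2 := by linarith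
    have hQ0 : 0 ≤ (1 + S + 2 * I) / 2 := by linarith
    calc (1 + S - 2 * I) / 2 * ((1 + S + 2 * I) / 2)
        ≤ ((ξ ^ 2 / 2) * A / 2) * 2 := by
          apply mul_le_mul hP hQ hQ0
          positivity
      _ = (A / 2) * ξ ^ 2 := by ring
  set B : ℝ := 8 * (E + M) / (E + 1) with hB_def
  clear_value B
  have hB_nn : 0 ≤ B := hB_def ▸ div_nonneg (by linarith : (0:ℝ) ≤ 8 * (E + M)) (le_of_lt hE1)
  have hBA : B = 16 * (A / 2) := by rw [hB_def, hA_def]; ring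
  -- expr ≤ √B * ξ
  have hstep : expr ≤ Real.sqrt B * ξ := by
    have hsq : expr ^ 2 ≤ (A / 2) * ξ ^ 2 := by
      nlinarith
    have h6 : expr = Real.sqrt (expr ^ 2) := (Real.sqrt_sq hexpr_nn).symm
    rw [h6]
    have h7 : Real.sqrt (expr ^ 2) ≤ Real.sqrt ((A / 2) * ξ ^ 2) :=
      Real.sqrt_le_sqrt hsq
    have h8 : Real.sqrt ((A / 2) * ξ ^ 2) = Real.sqrt (A / 2) * ξ := by
      rw [Real.sqrt_mul (by positivity), Real.sqrt_sq hξ]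
    have h9 : Real.sqrt (A / 2) ≤ Real.sqrt B := by
      apply Real.sqrt_le_sqrt; rw [hBA]; linarith [hA_nn]
    calc Real.sqrt (expr ^ 2) ≤ Real.sqrt (A / 2) * ξ := by rw [← h8]; exact h7
      _ ≤ Real.sqrt B * ξ := mul_le_mul_of_nonneg_right h9 hξ
  -- conclude
  have hfinal : Real.sqrt expr ≤ Real.sqrt (Real.sqrt B * ξ) := Real.sqrt_le_sqrt hstep
  have hrhs : Real.sqrt (Real.sqrt B * ξ) = B ^ ((1:ℝ)/4) * Real.sqrt ξ := by
    rw [Real.sqrt_mul (Real.sqrt_nonneg B)]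
    congr 1
    rw [Real.sqrt_eq_rpow, Real.sqrt_eq_rpow, ← Real.rpow_mul hB_nn]
    norm_num
  calc Real.sqrt expr ≤ Real.sqrt (Real.sqrt B * ξ) := hfinal
    _ = B ^ ((1:ℝ)/4) * Real.sqrt ξ := hrhs
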